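/- Let φ be an L(B, B*)-valued Carathéodory function on a neighborhood Ω of 0, and let L(φ) be the reproducing kernel Hilbert space with kernel k_φ(z,w) = (φ(z) + φ(w)*|_B)/(2(1 − z w̄)). Then ‖(k_φ(·,w) − k_φ(·,0))b‖²_{L(φ)} = (|w|²/(1 − |w|²)) · Re⟨φ(w)b, b⟩ for all w ∈ Ω ∩ 𝔻 and b ∈ B; consequently every f ∈ L(φ) is weakly continuous at the origin: ⟨f(w), b⟩ → ⟨f(0), b⟩ as w → 0. -/

import Mathlib

open scoped ComplexOrder
open Filter Metric

/-- The conjugate dual of a complex normed space: continuous anti-linear functionals. -/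
abbrev ConjDual (B : Type*) [NormedAddCommGroup B] [NormedSpace ℂ B] :=
  B →SL[starRingEnd ℂ] ℂ

/-- The scalar pairing `⟨k_φ(z,w)b, c⟩` of the Carathéodory kernel
`k_φ(z,w) = (φ(z) + φ(w)*|_B)/(2(1 - z w̄))`. -/
noncomputable def caraKernel {B : Type*} [NormedAddCommGroup B] [NormedSpace ℂ B]
    (φ : ℂ → (B →L[ℂ] ConjDual B)) (z w : ℂ) (b c : B) : ℂ :=
  (2 * (1 - z * (starRingEnd ℂ) w))⁻¹ * (φ z b c + (starRingEnd ℂ) (φ w c b))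

/-- For a Carathéodory function `φ` on a neighborhood `Ω` of `0` with associated
reproducing kernel Hilbert space `L(φ)` (modelled by `J : H → (ℂ → B*)`, with
`e w b = k_φ(·,w)b`), one has
`‖(k_φ(·,w) - k_φ(·,0))b‖² = (|w|²/(1-|w|²))·Re⟨φ(w)b,b⟩`,
and consequently every `f ∈ L(φ)` is weakly continuous at the origin. -/
theorem caratheodory_kernel_weak_continuity {B : Type*} [NormedAddCommGroup B]
    [NormedSpace ℂ B] [CompleteSpace B]
    (Ω : Set ℂ) (hΩ : Ω ∈ nhds (0 : ℂ))
    (φ : ℂ → (B →L[ℂ] ConjDual B))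
    (hwc : ∀ b : B, Tendsto (fun z => φ z b b) (nhdsWithin 0 Ω) (nhds (φ 0 b b)))
    (hK : ∀ (n : ℕ) (z : Fin n → ℂ), (∀ i, z i ∈ Ω) → ∀ b : Fin n → B,
      0 ≤ ∑ i, ∑ j, caraKernel φ (z i) (z j) (b j) (b i))
    {H : Type*} [NormedAddCommGroup H] [InnerProductSpace ℂ H] [CompleteSpace H]
    (J : H →ₗ[ℂ] (ℂ → ConjDual B)) (hJ : Function.Injective J)
    (e : ℂ → B → H)
    (he : ∀ w ∈ Ω, ∀ (b : B), ∀ z ∈ Ω, ∀ c : B, J (e w b) z c = caraKernel φ z w b c)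
    (hrep : ∀ (f : H), ∀ w ∈ Ω, ∀ b : B, inner ℂ (e w b) f = J f w b) :
    (∀ w ∈ Ω, ‖w‖ < 1 → ∀ b : B,
      ‖e w b - e 0 b‖ ^ 2 = ‖w‖ ^ 2 / (1 - ‖w‖ ^ 2) * (φ w b b).re) ∧
    (∀ (f : H) (b : B),
      Tendsto (fun w => J f w b) (nhdsWithin 0 Ω) (nhds (J f 0 b))) := by
  have h0 : (0 : ℂ) ∈ Ω := mem_of_mem_nhds hΩ
  have hinner : ∀ w ∈ Ω, ∀ z ∈ Ω, ∀ b c : B,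
      (inner ℂ (e w b) (e z c) : ℂ) = caraKernel φ w z c b := by
    intro w hw z hz b c
    rw [hrep _ w hw, he z hz c w hw b]
  have key : ∀ w ∈ Ω, ‖w‖ < 1 → ∀ b : B,
      ‖e w b - e 0 b‖ ^ 2 = ‖w‖ ^ 2 / (1 - ‖w‖ ^ 2) * (φ w b b).re := by
    intro w hw hw1 b
    have hne : (1 : ℝ) - ‖w‖ ^ 2 ≠ 0 := by nlinarith [norm_nonneg w]
    have hxx : (inner ℂ (e w b) (e w b) : ℂ) = caraKernel φ w w b b := hinner w hw w hw b b
    have hyy : (inner ℂ (e 0 b) (e 0 b) : ℂ) = caraKernel φ 0 0 b b := hinner 0 h0 0 h0 b b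
    have hxy : (inner ℂ (e w b) (e 0 b) : ℂ) = caraKernel φ w 0 b b := hinner w hw 0 h0 b b
    have hnx : ‖e w b‖ ^ 2 = (caraKernel φ w w b b).re := by
      rw [← hxx, ← RCLike.re_to_complex]
      exact (inner_self_eq_norm_sq (𝕜 := ℂ) _).symm
    have hny : ‖e 0 b‖ ^ 2 = (caraKernel φ 0 0 b b).re := by
      rw [← hyy, ← RCLike.re_to_complex]
      exact (inner_self_eq_norm_sq (𝕜 := ℂ) _).symm
    have hsq := norm_sub_sq (𝕜 := ℂ) (e w b) (e 0 b)
    rw [hxy, hnx, hny] at hsq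
    simp only [RCLike.re_to_complex] at hsq
    set a := φ w b b with ha
    set a0 := φ 0 b b with ha0
    have hne' : (1 : ℝ) - ‖w‖ ^ 2 ≠ 0 := by
      exact hne
    have hr : w * (starRingEnd ℂ) w = ((‖w‖ ^ 2 : ℝ) : ℂ) := by
      rw [Complex.mul_conj]
      norm_cast
      rw [Complex.normSq_eq_norm_sq]
    have hc1 : caraKernel φ w w b b = (((1 - ‖w‖ ^ 2)⁻¹ * a.re : ℝ) : ℂ) := by
      unfold caraKernel
      rw [hr, Complex.add_conj,
        show ((2 : ℂ) * (1 - ((‖w‖ ^ 2 : ℝ) : ℂ))) = (((2 * (1 - ‖w‖ ^ 2) : ℝ)) : ℂ) by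
          push_cast; ring,
        ← Complex.ofReal_inv, ← Complex.ofReal_mul]
      congr 1
      field_simp
      ring
    have hc3 : caraKernel φ 0 0 b b = ((a0.re : ℝ) : ℂ) := by
      have h : caraKernel φ 0 0 b b = (2 : ℂ)⁻¹ * (a0 + (starRingEnd ℂ) a0) := by
        unfold caraKernel; norm_num
        rfl
      rw [h, Complex.add_conj]
      push_cast
      ring
    have hc2 : caraKernel φ w 0 b b = (2 : ℂ)⁻¹ * (a + (starRingEnd ℂ) a0) := by
      unfold caraKernel
      norm_num
      rfl
    have hre2 : (caraKernel φ w 0 b b).re = (a.re + a0.re) / 2 := by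
      rw [hc2, show ((2 : ℂ)⁻¹) = (((2⁻¹ : ℝ)) : ℂ) by norm_num, Complex.re_ofReal_mul]
      rw [Complex.add_re, Complex.conj_re]
      ring
    rw [hsq, hc1, hc3, hre2, Complex.ofReal_re, Complex.ofReal_re]
    field_simp
    ring
  refine ⟨key, ?_⟩
  intro f b
  -- the expression tends to 0
  have hnorm0 : Tendsto (fun w : ℂ => ‖w‖) (nhdsWithin 0 Ω) (nhds 0) := by
    have : Tendsto (fun w : ℂ => ‖w‖) (nhds 0) (nhds ‖(0 : ℂ)‖) :=
      (continuous_norm).tendsto 0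
    simpa using this.mono_left nhdsWithin_le_nhds
  have hre0 : Tendsto (fun w : ℂ => (φ w b b).re) (nhdsWithin 0 Ω)
      (nhds ((φ 0 b b).re)) := (Complex.continuous_re.tendsto _).comp (hwc b)
  have hexpr : Tendsto (fun w : ℂ => ‖w‖ ^ 2 / (1 - ‖w‖ ^ 2) * (φ w b b).re)
      (nhdsWithin 0 Ω) (nhds 0) := by
    have h1 : Tendsto (fun w : ℂ => ‖w‖ ^ 2 / (1 - ‖w‖ ^ 2)) (nhdsWithin 0 Ω) (nhds 0) := by
      have hnum : Tendsto (fun w : ℂ => ‖w‖ ^ 2) (nhdsWithin 0 Ω) (nhds 0) := by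
        simpa using hnorm0.pow 2
      have hden : Tendsto (fun w : ℂ => 1 - ‖w‖ ^ 2) (nhdsWithin 0 Ω) (nhds 1) := by
        simpa using (tendsto_const_nhds.sub (hnorm0.pow 2) :
          Tendsto (fun w : ℂ => 1 - ‖w‖ ^ 2) (nhdsWithin 0 Ω) (nhds (1 - 0 ^ 2)))
      have := hnum.div hden one_ne_zero
      rwa [zero_div] at this
    simpa using h1.mul hre0
  have hev : ∀ᶠ w in nhdsWithin 0 Ω, w ∈ Ω ∧ ‖w‖ < 1 := by
    have h1 : ∀ᶠ w in nhdsWithin 0 Ω, w ∈ Ω := eventually_mem_nhdsWithin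
    have h2 : ∀ᶠ w : ℂ in nhdsWithin 0 Ω, ‖w‖ < 1 := by
      have : ∀ᶠ w : ℂ in nhds 0, ‖w‖ < 1 := by
        have := Metric.ball_mem_nhds (0 : ℂ) one_pos
        filter_upwards [this] with w hw
        simpa [Metric.mem_ball] using hw
      exact this.filter_mono nhdsWithin_le_nhds
    exact h1.and h2
  have hE : Tendsto (fun w : ℂ => ‖e w b - e 0 b‖) (nhdsWithin 0 Ω) (nhds 0) := by
    have hs : Tendsto (fun w : ℂ =>
        Real.sqrt (‖w‖ ^ 2 / (1 - ‖w‖ ^ 2) * (φ w b b).re)) (nhdsWithin 0 Ω) (nhds 0) := by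
      have := (Real.continuous_sqrt.tendsto 0).comp hexpr
      rwa [Real.sqrt_zero] at this
    refine hs.congr' ?_
    filter_upwards [hev] with w hw
    rw [← key w hw.1 hw.2 b, Real.sqrt_sq (norm_nonneg _)]
  rw [tendsto_iff_norm_sub_tendsto_zero]
  refine squeeze_zero' (Eventually.of_forall fun w => norm_nonneg _) ?_
    (by simpa using hE.mul_const ‖f‖)
  filter_upwards [hev] with w hw
  have h1 : J f w b - J f 0 b = (inner ℂ (e w b - e 0 b) f : ℂ) := by
    rw [inner_sub_left, hrep f w hw.1 b, hrep f 0 h0 b]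
  rw [h1]
  exact norm_inner_le_norm _ _
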